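/- Let H1, H2, H3, H4 be subgroups of a finite group G with H4 ≤ H3. Then the Ingleton inequality holds for (H1, H2, H3, H4). -/

import Mathlib

open Subgroup

lemma relindex_mul_card_inf {G : Type*} [Group G] (B K : Subgroup G) :
    B.relIndex K * Nat.card (B ⊓ K : Subgroup G) = Nat.card K := by
  have h1 : Nat.card ((B ⊓ K).subgroupOf K) = Nat.card (B ⊓ K : Subgroup G) :=
    Nat.card_congr (subgroupOfEquivOfLe inf_le_right).toEquiv
  have := Subgroup.index_mul_card ((B ⊓ K).subgroupOf K)
  rw [h1, inf_subgroupOf_right] at this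
  exact this

lemma key {G : Type*} [Group G] [Finite G] (A B C : Subgroup G) :
    Nat.card (A ⊓ B : Subgroup G) * Nat.card (A ⊓ C : Subgroup G) ≤
    Nat.card (A : Subgroup G) * Nat.card (A ⊓ B ⊓ C : Subgroup G) := by
  have h1 := relindex_mul_card_inf B A
  have h2 := relindex_mul_card_inf B (A ⊓ C)
  have hle : B.relIndex (A ⊓ C) ≤ B.relIndex A :=
    relIndex_le_of_le_right inf_le_left FiniteIndex.index_ne_zero
  have e : B ⊓ (A ⊓ C) = A ⊓ B ⊓ C := by rw [← inf_assoc, inf_comm B A]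
  rw [e] at h2
  have e2 : B ⊓ A = A ⊓ B := inf_comm B A
  rw [e2] at h1
  calc Nat.card (A ⊓ B : Subgroup G) * Nat.card (A ⊓ C : Subgroup G)
      = Nat.card (A ⊓ B : Subgroup G) * (B.relIndex (A ⊓ C) * Nat.card (A ⊓ B ⊓ C : Subgroup G)) := by rw [h2]
    _ ≤ Nat.card (A ⊓ B : Subgroup G) * (B.relIndex A * Nat.card (A ⊓ B ⊓ C : Subgroup G)) := by
        exact Nat.mul_le_mul_left _ (Nat.mul_le_mul_right _ hle)
    _ = (B.relIndex A * Nat.card (A ⊓ B : Subgroup G)) * Nat.card (A ⊓ B ⊓ C : Subgroup G) := by ring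
    _ = Nat.card (A : Subgroup G) * Nat.card (A ⊓ B ⊓ C : Subgroup G) := by rw [h1]

theorem stmt11 {G : Type*} [Group G] [Finite G] (H1 H2 H3 H4 : Subgroup G)
    (h : H4 ≤ H3) :
    Nat.card (H1 : Subgroup G) * Nat.card (H2 : Subgroup G) * Nat.card (H3 ⊓ H4 : Subgroup G) * Nat.card (H1 ⊓ H2 ⊓ H3 : Subgroup G) * Nat.card (H1 ⊓ H2 ⊓ H4 : Subgroup G) ≥ Nat.card (H1 ⊓ H2 : Subgroup G) * Nat.card (H1 ⊓ H3 : Subgroup G) * Nat.card (H1 ⊓ H4 : Subgroup G) * Nat.card (H2 ⊓ H3 : Subgroup G) * Nat.card (H2 ⊓ H4 : Subgroup G) := by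
  have h34 : H3 ⊓ H4 = H4 := inf_eq_right.mpr h
  rw [h34]
  -- |H1||H123| ≥ |H12||H13|
  have k1 := key H1 H2 H3
  -- |H4||H124| ≥ |H14||H24|
  have k2 := key H4 H1 H2
  have e1 : H4 ⊓ H1 = H1 ⊓ H4 := inf_comm _ _
  have e2 : H4 ⊓ H2 = H2 ⊓ H4 := inf_comm _ _
  have e3 : H4 ⊓ H1 ⊓ H2 = H1 ⊓ H2 ⊓ H4 := by rw [e1, inf_assoc, inf_comm H4 H2, ← inf_assoc]
  rw [e3, e1, e2] at k2
  -- |H2| ≥ |H23|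
  have k3 : Nat.card (H2 ⊓ H3 : Subgroup G) ≤ Nat.card (H2 : Subgroup G) :=
    Nat.card_le_card_of_injective _ (Subgroup.inclusion_injective inf_le_left)
  calc Nat.card (H1 ⊓ H2 : Subgroup G) * Nat.card (H1 ⊓ H3 : Subgroup G) * Nat.card (H1 ⊓ H4 : Subgroup G) * Nat.card (H2 ⊓ H3 : Subgroup G) * Nat.card (H2 ⊓ H4 : Subgroup G)
      = (Nat.card (H1 ⊓ H2 : Subgroup G) * Nat.card (H1 ⊓ H3 : Subgroup G)) * Nat.card (H2 ⊓ H3 : Subgroup G) * (Nat.card (H1 ⊓ H4 : Subgroup G) * Nat.card (H2 ⊓ H4 : Subgroup G)) := by ring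
    _ ≤ (Nat.card (H1 : Subgroup G) * Nat.card (H1 ⊓ H2 ⊓ H3 : Subgroup G)) * Nat.card (H2 : Subgroup G) * (Nat.card (H4 : Subgroup G) * Nat.card (H1 ⊓ H2 ⊓ H4 : Subgroup G)) := by
        exact Nat.mul_le_mul (Nat.mul_le_mul k1 k3) k2
    _ = Nat.card (H1 : Subgroup G) * Nat.card (H2 : Subgroup G) * Nat.card (H4 : Subgroup G) * Nat.card (H1 ⊓ H2 ⊓ H3 : Subgroup G) * Nat.card (H1 ⊓ H2 ⊓ H4 : Subgroup G) := by ring
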